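/- Assume the minimal-counterexample hypothesis, and suppose 7 ≤ k ≤ 30. If p is a prime with 2p ≥ k that divides at least one of the moduli m_1, …, m_k, then p divides exactly two of the moduli; that is, the number of indices i with p ∣ m_i is exactly 2. -/
import Mathlib


/-- The congruence class of `a` modulo `m`, as a set of integers. -/
def congClass (a : ℤ) (m : ℕ) : Set ℤ :=
  {x : ℤ | Int.ModEq (m : ℤ) x a}

/-- `k` is a counterexample to the Disjoint Congruence Classes Conjecture:
there are `k` pairwise disjoint congruence classes whose moduli have pairwise
gcds all strictly less than `k`. -/
def IsCounterexample (k : ℕ) : Prop :=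
  ∃ (a : Fin k → ℤ) (m : Fin k → ℕ),
    (∀ i, 0 < m i) ∧
    (∀ i j, i ≠ j → Disjoint (congClass (a i) (m i)) (congClass (a j) (m j))) ∧
    (∀ i j, i ≠ j → Nat.gcd (m i) (m j) < k)

lemma mem_congClass {a x : ℤ} {m : ℕ} : x ∈ congClass a m ↔ (m : ℤ) ∣ a - x := by
  constructor
  · intro h; exact Int.ModEq.dvd h
  · intro h; exact (Int.modEq_iff_dvd).mpr h

-- CRT direction: if gcd divides a-b then classes intersect
lemma not_disjoint_of_dvd {a b : ℤ} {m n : ℕ}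
    (h : ((Nat.gcd m n : ℕ) : ℤ) ∣ a - b) :
    ¬ Disjoint (congClass a m) (congClass b n) := by
  rw [Set.not_disjoint_iff]
  obtain ⟨t, ht⟩ := h
  refine ⟨a - (m : ℤ) * Int.gcdA m n * t, ?_, ?_⟩
  · rw [mem_congClass]; exact ⟨Int.gcdA m n * t, by ring⟩
  · rw [mem_congClass]
    have hg : ((Nat.gcd m n : ℕ) : ℤ) = m * Int.gcdA m n + n * Int.gcdB m n := by
      rw [← Int.gcd_natCast_natCast]; exact Int.gcd_eq_gcd_ab m n
    refine ⟨-(Int.gcdB m n) * t, ?_⟩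
    have : b - (a - (m : ℤ) * Int.gcdA m n * t)
        = -(a-b) + (m : ℤ) * Int.gcdA m n * t := by ring
    rw [this, ht, hg]; ring

lemma gcd_dvd_of_not_disjoint {a b : ℤ} {m n : ℕ}
    (h : ¬ Disjoint (congClass a m) (congClass b n)) :
    ((Nat.gcd m n : ℕ) : ℤ) ∣ a - b := by
  rw [Set.not_disjoint_iff] at h
  obtain ⟨x, hx, hy⟩ := h
  rw [mem_congClass] at hx hy
  have h1 : ((Nat.gcd m n : ℕ) : ℤ) ∣ a - x :=
    dvd_trans (Int.natCast_dvd_natCast.mpr (Nat.gcd_dvd_left m n)) hx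
  have h2 : ((Nat.gcd m n : ℕ) : ℤ) ∣ b - x :=
    dvd_trans (Int.natCast_dvd_natCast.mpr (Nat.gcd_dvd_right m n)) hy
  have : a - b = (a - x) - (b - x) := by ring
  rw [this]; exact dvd_sub h1 h2


def T3 : ℕ → ℕ
  | 0 => 1 | 1 => 1 | 2 => 1 | 3 => 1 | 4 => 2 | 5 => 4 | 6 => 8 | 7 => 12 | 8 => 18
  | _ => 27

lemma NUM1' : ∀ u < 10, ∀ w1 < 10, ∀ w2 < 10, ∀ w3 < 10,
    w1 + w2 + w3 ≤ u → w1 * w2 * w3 ≤ T3 u := by decide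

lemma NUM1 {u w1 w2 w3 : ℕ} (hu : u ≤ 9) (h : w1 + w2 + w3 ≤ u) :
    w1 * w2 * w3 ≤ T3 u :=
  NUM1' u (by omega) w1 (by omega) w2 (by omega) w3 (by omega) h

lemma NUM2' : ∀ u < 10, ∀ s < 10, s + 3 ≤ u → T3 (u - s) + s ≤ T3 u := by decide

lemma NUM3' : ∀ s < 10, 1 ≤ s → T3 (9 - s) ≤ 18 := by decide

lemma NUM4 : ∀ w1 < 10, ∀ w2 < 10, ∀ w3 < 10,
    w1 + w2 + w3 ≤ 9 → 27 ≤ w1 * w2 * w3 → w1 = 3 ∧ w2 = 3 ∧ w3 = 3 := by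
  have key : ∀ w1 < 10, ∀ w2 < 10, ∀ w3 < 10,
      (decide (w1 = 3 ∧ w2 = 3 ∧ w3 = 3) || decide (¬(w1 + w2 + w3 ≤ 9)) ||
        decide (¬(27 ≤ w1 * w2 * w3))) = true := by decide
  intro w1 h1 w2 h2 w3 h3 hs hp
  have := key w1 h1 w2 h2 w3 h3
  simp only [Bool.or_eq_true, decide_eq_true_eq] at this
  tauto

lemma NUMMAIN (k s w1 w2 w3 C : ℕ) (hk7 : 7 ≤ k) (hk30 : k ≤ 30)
    (hC : C + 1 = ((Finset.range k).filter Nat.Prime).card)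
    (hs : 3 ≤ s) (hsk : s + 1 ≤ k)
    (hw1 : 1 ≤ w1) (hw2 : 1 ≤ w2) (hw3 : 1 ≤ w3)
    (hA : w1 + w2 + w3 + (s - 3) ≤ C)
    (hB : k - s ≤ w1 * w2 * w3) :
    k = 30 ∧ s = 3 ∧ w1 = 3 ∧ w2 = 3 ∧ w3 = 3 ∧ C = 9 := by
  have hσC : (s - 3) + 3 ≤ C := by omega
  have hC9 : C ≤ 9 := by
    have h10 : ((Finset.range k).filter Nat.Prime).card
        ≤ ((Finset.range 30).filter Nat.Prime).card :=
      Finset.card_le_card (Finset.filter_subset_filter _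
        (Finset.range_subset_range.mpr hk30))
    have h30 : ((Finset.range 30).filter Nat.Prime).card = 10 := by decide
    omega
  have key1 : w1 * w2 * w3 ≤ T3 (C - (s - 3)) := NUM1 (by omega) (by omega)
  have key2 : T3 (C - (s - 3)) + (s - 3) ≤ T3 C :=
    NUM2' C (by omega) (s - 3) (by omega) hσC
  have key3 : k - 3 ≤ T3 C := by omega
  interval_cases k
  · -- k = 7
    have hc : ((Finset.range 7).filter Nat.Prime).card = 3 := by decide
    rw [hc] at hC
    have hCv : C = 2 := by omega
    rw [hCv] at key3
    norm_num [T3] at key3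
  · -- k = 8
    have hc : ((Finset.range 8).filter Nat.Prime).card = 4 := by decide
    rw [hc] at hC
    have hCv : C = 3 := by omega
    rw [hCv] at key3
    norm_num [T3] at key3
  · -- k = 9
    have hc : ((Finset.range 9).filter Nat.Prime).card = 4 := by decide
    rw [hc] at hC
    have hCv : C = 3 := by omega
    rw [hCv] at key3
    norm_num [T3] at key3
  · -- k = 10
    have hc : ((Finset.range 10).filter Nat.Prime).card = 4 := by decide
    rw [hc] at hC
    have hCv : C = 3 := by omega
    rw [hCv] at key3
    norm_num [T3] at key3
  · -- k = 11
    have hc : ((Finset.range 11).filter Nat.Prime).card = 4 := by decide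
    rw [hc] at hC
    have hCv : C = 3 := by omega
    rw [hCv] at key3
    norm_num [T3] at key3
  · -- k = 12
    have hc : ((Finset.range 12).filter Nat.Prime).card = 5 := by decide
    rw [hc] at hC
    have hCv : C = 4 := by omega
    rw [hCv] at key3
    norm_num [T3] at key3
  · -- k = 13
    have hc : ((Finset.range 13).filter Nat.Prime).card = 5 := by decide
    rw [hc] at hC
    have hCv : C = 4 := by omega
    rw [hCv] at key3
    norm_num [T3] at key3
  · -- k = 14
    have hc : ((Finset.range 14).filter Nat.Prime).card = 6 := by decide
    rw [hc] at hC
    have hCv : C = 5 := by omega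
    rw [hCv] at key3
    norm_num [T3] at key3
  · -- k = 15
    have hc : ((Finset.range 15).filter Nat.Prime).card = 6 := by decide
    rw [hc] at hC
    have hCv : C = 5 := by omega
    rw [hCv] at key3
    norm_num [T3] at key3
  · -- k = 16
    have hc : ((Finset.range 16).filter Nat.Prime).card = 6 := by decide
    rw [hc] at hC
    have hCv : C = 5 := by omega
    rw [hCv] at key3
    norm_num [T3] at key3
  · -- k = 17
    have hc : ((Finset.range 17).filter Nat.Prime).card = 6 := by decide
    rw [hc] at hC
    have hCv : C = 5 := by omega
    rw [hCv] at key3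
    norm_num [T3] at key3
  · -- k = 18
    have hc : ((Finset.range 18).filter Nat.Prime).card = 7 := by decide
    rw [hc] at hC
    have hCv : C = 6 := by omega
    rw [hCv] at key3
    norm_num [T3] at key3
  · -- k = 19
    have hc : ((Finset.range 19).filter Nat.Prime).card = 7 := by decide
    rw [hc] at hC
    have hCv : C = 6 := by omega
    rw [hCv] at key3
    norm_num [T3] at key3
  · -- k = 20
    have hc : ((Finset.range 20).filter Nat.Prime).card = 8 := by decide
    rw [hc] at hC
    have hCv : C = 7 := by omega
    rw [hCv] at key3
    norm_num [T3] at key3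
  · -- k = 21
    have hc : ((Finset.range 21).filter Nat.Prime).card = 8 := by decide
    rw [hc] at hC
    have hCv : C = 7 := by omega
    rw [hCv] at key3
    norm_num [T3] at key3
  · -- k = 22
    have hc : ((Finset.range 22).filter Nat.Prime).card = 8 := by decide
    rw [hc] at hC
    have hCv : C = 7 := by omega
    rw [hCv] at key3
    norm_num [T3] at key3
  · -- k = 23
    have hc : ((Finset.range 23).filter Nat.Prime).card = 8 := by decide
    rw [hc] at hC
    have hCv : C = 7 := by omega
    rw [hCv] at key3
    norm_num [T3] at key3
  · -- k = 24
    have hc : ((Finset.range 24).filter Nat.Prime).card = 9 := by decide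
    rw [hc] at hC
    have hCv : C = 8 := by omega
    rw [hCv] at key3
    norm_num [T3] at key3
  · -- k = 25
    have hc : ((Finset.range 25).filter Nat.Prime).card = 9 := by decide
    rw [hc] at hC
    have hCv : C = 8 := by omega
    rw [hCv] at key3
    norm_num [T3] at key3
  · -- k = 26
    have hc : ((Finset.range 26).filter Nat.Prime).card = 9 := by decide
    rw [hc] at hC
    have hCv : C = 8 := by omega
    rw [hCv] at key3
    norm_num [T3] at key3
  · -- k = 27
    have hc : ((Finset.range 27).filter Nat.Prime).card = 9 := by decide
    rw [hc] at hC
    have hCv : C = 8 := by omega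
    rw [hCv] at key3
    norm_num [T3] at key3
  · -- k = 28
    have hc : ((Finset.range 28).filter Nat.Prime).card = 9 := by decide
    rw [hc] at hC
    have hCv : C = 8 := by omega
    rw [hCv] at key3
    norm_num [T3] at key3
  · -- k = 29
    have hc : ((Finset.range 29).filter Nat.Prime).card = 9 := by decide
    rw [hc] at hC
    have hCv : C = 8 := by omega
    rw [hCv] at key3
    norm_num [T3] at key3
  · -- k = 30
    have hc : ((Finset.range 30).filter Nat.Prime).card = 10 := by decide
    rw [hc] at hC
    have hCv : C = 9 := by omega
    subst hCv
    have hs3 : s = 3 := by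
      by_contra hne
      have hσ1 : 1 ≤ s - 3 := by omega
      have h18 : T3 (9 - (s - 3)) ≤ 18 := NUM3' (s - 3) (by omega) hσ1
      omega
    subst hs3
    have h27 : 27 ≤ w1 * w2 * w3 := by omega
    have hsum : w1 + w2 + w3 ≤ 9 := by omega
    obtain ⟨e1, e2, e3⟩ := NUM4 w1 (by omega) w2 (by omega) w3 (by omega) hsum h27
    exact ⟨rfl, rfl, e1, e2, e3, rfl⟩

lemma five_le_prime {q : ℕ} (hq : q.Prime) (h2 : q ≠ 2) (h3 : q ≠ 3) : 5 ≤ q := by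
  by_contra h
  push_neg at h
  interval_cases q
  · exact absurd hq (by decide)
  · exact absurd hq (by decide)
  · exact h2 rfl
  · exact h3 rfl
  · exact absurd hq (by decide)

lemma fifteen_le_two_odd_primes {x y : ℕ} (hx : x.Prime) (hy : y.Prime)
    (hxy : x ≠ y) (h2x : x ≠ 2) (h2y : y ≠ 2) : 15 ≤ x * y := by
  have bx := hx.two_le
  have by' := hy.two_le
  by_cases e : x = 3
  · have : 5 ≤ y := five_le_prime hy h2y (by omega)
    nlinarith
  · have hx5 : 5 ≤ x := five_le_prime hx h2x e
    have hy3 : 3 ≤ y := by omega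
    nlinarith

lemma thirty_le_three_primes {q1 q2 q3 : ℕ} (h1 : q1.Prime) (h2 : q2.Prime)
    (h3 : q3.Prime) (h12 : q1 ≠ q2) (h13 : q1 ≠ q3) (h23 : q2 ≠ q3) :
    30 ≤ q1 * q2 * q3 := by
  have b1 := h1.two_le
  have b2 := h2.two_le
  have b3 := h3.two_le
  by_cases e1 : q1 = 2
  · have := fifteen_le_two_odd_primes h2 h3 h23 (by omega) (by omega)
    subst e1; nlinarith
  · by_cases e2 : q2 = 2
    · have := fifteen_le_two_odd_primes h1 h3 h13 e1 (by omega)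
      subst e2; nlinarith
    · by_cases e3 : q3 = 2
      · have := fifteen_le_two_odd_primes h1 h2 h12 e1 e2
        subst e3; nlinarith
      · have c1 : 3 ≤ q1 := by omega
        have c2 : 3 ≤ q2 := by omega
        have c3 : 3 ≤ q3 := by omega
        by_cases f1 : q1 = 3
        · have g2 : 5 ≤ q2 := five_le_prime h2 e2 (by omega)
          have g3 : 5 ≤ q3 := five_le_prime h3 e3 (by omega)
          calc (30:ℕ) ≤ 3 * 5 * 5 := by norm_num
            _ ≤ q1 * q2 * q3 :=
              Nat.mul_le_mul (Nat.mul_le_mul (by omega) g2) g3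
        · have g1 : 5 ≤ q1 := five_le_prime h1 e1 f1
          calc (30:ℕ) ≤ 5 * 3 * 2 := by norm_num
            _ ≤ q1 * q2 * q3 :=
              Nat.mul_le_mul (Nat.mul_le_mul g1 c2) b3


theorem min_ce_big_prime (k : ℕ) (a : Fin k → ℤ) (m : Fin k → ℕ)
    (hk : 2 ≤ k)
    (hm : ∀ i, 0 < m i)
    (hdisj : ∀ i j, i ≠ j → Disjoint (congClass (a i) (m i)) (congClass (a j) (m j)))
    (hgcd : ∀ i j, i ≠ j → Nat.gcd (m i) (m j) < k)
    (hkmin : ∀ k', 2 ≤ k' → IsCounterexample k' → k ≤ k')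
    (hsummin : ∀ (a' : Fin k → ℤ) (m' : Fin k → ℕ),
      (∀ i, 0 < m' i) →
      (∀ i j, i ≠ j → Disjoint (congClass (a' i) (m' i)) (congClass (a' j) (m' j))) →
      (∀ i j, i ≠ j → Nat.gcd (m' i) (m' j) < k) →
      ∑ i, m i ≤ ∑ i, m' i)
    (hk7 : 7 ≤ k) (hk30 : k ≤ 30) (p : ℕ) (hp : p.Prime) (hp2 : k ≤ 2 * p)
    (hex : ∃ i, p ∣ m i) :
    (Finset.univ.filter (fun i => p ∣ m i)).card = 2 := by
  set S : Finset (Fin k) := Finset.univ.filter (fun i => p ∣ m i) with hS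
  have hmemS : ∀ i, i ∈ S ↔ p ∣ m i := by intro i; simp [hS]
  set T : Finset (Fin k) := Finset.univ.filter (fun i => ¬ p ∣ m i) with hT
  have hmemT : ∀ i, i ∈ T ↔ ¬ p ∣ m i := by intro i; simp [hT]
  have hST : S.card + T.card = k := by
    rw [hS, hT, Finset.card_filter_add_card_filter_not]
    simp
  have hmne : ∀ i, m i ≠ 0 := fun i => (hm i).ne'
  have hgcdpos : ∀ i j : Fin k, 0 < Nat.gcd (m i) (m j) :=
    fun i j => Nat.gcd_pos_of_pos_left _ (hm i)
  have hnd : ∀ i j : Fin k, i ≠ j → ¬ ((Nat.gcd (m i) (m j) : ℕ) : ℤ) ∣ a i - a j := by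
    intro i j hij hdvd
    exact not_disjoint_of_dvd hdvd (hdisj i j hij)
  have hcard1 : 1 ≤ S.card := by
    obtain ⟨i, hi⟩ := hex
    exact Finset.card_pos.mpr ⟨i, (hmemS i).mpr hi⟩
  have gcdSS : ∀ i j : Fin k, i ≠ j → p ∣ m i → p ∣ m j → Nat.gcd (m i) (m j) = p := by
    intro i j hij hpi hpj
    obtain ⟨c, hc⟩ := Nat.dvd_gcd hpi hpj
    have hlt := hgcd i j hij
    have hpos := hp.pos
    have hgpos := hgcdpos i j
    have hcpos : 0 < c := by
      rcases Nat.eq_zero_or_pos c with h | h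
      · rw [h, mul_zero] at hc; omega
      · exact h
    have hcle : c < 2 := by
      by_contra hge
      push_neg at hge
      have : p * 2 ≤ p * c := Nat.mul_le_mul_left p hge
      omega
    have hc1 : c = 1 := by omega
    rw [hc, hc1, mul_one]
  -- ==================== card ≠ 1 ====================
  have hcardne1 : S.card ≠ 1 := by
    intro h1
    obtain ⟨i0, hi0⟩ := Finset.card_eq_one.mp h1
    have hpm : p ∣ m i0 := by
      have : i0 ∈ S := by rw [hi0]; exact Finset.mem_singleton_self i0
      exact (hmemS i0).mp this
    have hnot : ∀ j, j ≠ i0 → ¬ p ∣ m j := by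
      intro j hj hd
      have : j ∈ S := (hmemS j).mpr hd
      rw [hi0, Finset.mem_singleton] at this
      exact hj this
    have hsplit : p ^ (m i0).factorization p * (ordCompl[p] (m i0)) = m i0 :=
      Nat.ordProj_mul_ordCompl_eq_self (m i0) p
    have hocpos : 0 < ordCompl[p] (m i0) := Nat.ordCompl_pos p (hmne i0)
    have hv1 : 1 ≤ (m i0).factorization p :=
      hp.factorization_pos_of_dvd (hmne i0) hpm
    have hoclt : ordCompl[p] (m i0) < m i0 := by
      have hpv : p ≤ p ^ (m i0).factorization p := Nat.le_self_pow (by omega) p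
      have h2 := hp.two_le
      nlinarith [hsplit, hocpos]
    have hkey : ∀ j, j ≠ i0 →
        Nat.gcd (ordCompl[p] (m i0)) (m j) = Nat.gcd (m i0) (m j) := by
      intro j hj
      have hcop : Nat.Coprime (p ^ (m i0).factorization p) (m j) :=
        Nat.Coprime.pow_left _ ((Nat.Prime.coprime_iff_not_dvd hp).mpr (hnot j hj))
      calc Nat.gcd (ordCompl[p] (m i0)) (m j)
          = Nat.gcd (p ^ (m i0).factorization p * ordCompl[p] (m i0)) (m j) :=
            (Nat.Coprime.gcd_mul_left_cancel _ hcop).symm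
        _ = Nat.gcd (m i0) (m j) := by rw [hsplit]
    set m' := Function.update m i0 (ordCompl[p] (m i0)) with hm'
    have hm'i0 : m' i0 = ordCompl[p] (m i0) := Function.update_self i0 _ m
    have hm'j : ∀ j, j ≠ i0 → m' j = m j := fun j hj => Function.update_of_ne hj _ m
    have hdmain : ∀ j, j ≠ i0 →
        Disjoint (congClass (a i0) (ordCompl[p] (m i0))) (congClass (a j) (m j)) := by
      intro j hj
      by_contra hcon
      have hd := gcd_dvd_of_not_disjoint hcon
      rw [hkey j hj] at hd
      exact hnd i0 j (fun h => hj h.symm) hd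
    have hpos' : ∀ i, 0 < m' i := by
      intro i
      by_cases hi : i = i0
      · rw [hi, hm'i0]; exact hocpos
      · rw [hm'j i hi]; exact hm i
    have hdisj' : ∀ i j, i ≠ j →
        Disjoint (congClass (a i) (m' i)) (congClass (a j) (m' j)) := by
      intro i j hij
      by_cases hi : i = i0
      · subst hi
        rw [hm'i0, hm'j j (fun h => hij h.symm)]
        exact hdmain j (fun h => hij h.symm)
      · by_cases hj : j = i0
        · subst hj
          rw [hm'i0, hm'j i hi]
          exact (hdmain i hi).symm
        · rw [hm'j i hi, hm'j j hj]
          exact hdisj i j hij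
    have hgcd' : ∀ i j, i ≠ j → Nat.gcd (m' i) (m' j) < k := by
      intro i j hij
      by_cases hi : i = i0
      · subst hi
        rw [hm'i0, hm'j j (fun h => hij h.symm), hkey j (fun h => hij h.symm)]
        exact hgcd _ _ hij
      · by_cases hj : j = i0
        · subst hj
          rw [hm'i0, hm'j i hi, Nat.gcd_comm, hkey i hi, Nat.gcd_comm]
          exact hgcd _ _ hij
        · rw [hm'j i hi, hm'j j hj]
          exact hgcd i j hij
    have hle := hsummin a m' hpos' hdisj' hgcd'
    have hsum' : ∑ i, m' i = ordCompl[p] (m i0) + ∑ i ∈ Finset.univ \ {i0}, m i := by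
      rw [hm', Finset.sum_update_of_mem (Finset.mem_univ i0)]
    have hsum : ∑ i, m i = m i0 + ∑ i ∈ Finset.univ \ {i0}, m i := by
      rw [← Finset.erase_eq, ← Finset.add_sum_erase _ m (Finset.mem_univ i0)]
    rw [hsum, hsum'] at hle
    omega
  -- ==================== card ≤ 2 ====================
  have hcardle2 : S.card ≤ 2 := by
    by_contra hgt
    push_neg at hgt
    have hgt3 : 3 ≤ S.card := hgt
    -- three distinct elements of S
    obtain ⟨i1, hi1⟩ := Finset.card_pos.mp (show 0 < S.card by omega)
    have he1 : 0 < (S.erase i1).card := by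
      rw [Finset.card_erase_of_mem hi1]; omega
    obtain ⟨i2, hi2⟩ := Finset.card_pos.mp he1
    have he2 : 0 < ((S.erase i1).erase i2).card := by
      rw [Finset.card_erase_of_mem hi2, Finset.card_erase_of_mem hi1]; omega
    obtain ⟨i3, hi3⟩ := Finset.card_pos.mp he2
    have hi2S : i2 ∈ S := Finset.mem_of_mem_erase hi2
    have hi3S : i3 ∈ S := Finset.mem_of_mem_erase (Finset.mem_of_mem_erase hi3)
    have h21 : i2 ≠ i1 := Finset.ne_of_mem_erase hi2
    have h31 : i3 ≠ i1 := Finset.ne_of_mem_erase (Finset.mem_of_mem_erase hi3)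
    have h32 : i3 ≠ i2 := Finset.ne_of_mem_erase hi3
    have h12 : i1 ≠ i2 := Ne.symm h21
    have hpk : p < k := by
      have hd : p ≤ Nat.gcd (m i1) (m i2) :=
        Nat.le_of_dvd (hgcdpos i1 i2)
          (Nat.dvd_gcd ((hmemS i1).mp hi1) ((hmemS i2).mp hi2S))
      have := hgcd i1 i2 h12
      omega
    rcases Finset.eq_empty_or_nonempty T with hTe | ⟨j0, hj0⟩
    · -- all moduli divisible by p : contradiction k ≤ p < k
      have hall : ∀ i, p ∣ m i := by
        intro i
        by_contra hni
        have : i ∈ T := (hmemT i).mpr hni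
        rw [hTe] at this
        exact absurd this (Finset.notMem_empty i)
      haveI : NeZero p := ⟨hp.ne_zero⟩
      have hinj : Function.Injective (fun i : Fin k => ((a i : ZMod p))) := by
        intro i j hij
        by_contra hne
        have hij' : ((a i : ZMod p)) = ((a j : ℤ) : ZMod p) := hij
        have hzero : (((a i - a j : ℤ)) : ZMod p) = 0 := by
          push_cast
          exact sub_eq_zero.mpr hij'
        have hdvd : ((p : ℕ) : ℤ) ∣ a i - a j :=
          (ZMod.intCast_zmod_eq_zero_iff_dvd _ _).mp hzero
        have hg : Nat.gcd (m i) (m j) = p := gcdSS i j hne (hall i) (hall j)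
        exact hnd i j hne (by rw [hg]; exact hdvd)
      have hkp : k ≤ p := by
        have := Fintype.card_le_of_injective _ hinj
        simpa [ZMod.card] using this
      omega
    · -- T nonempty : the counting argument
      have hTpos : 0 < T.card := Finset.card_pos.mpr ⟨j0, hj0⟩
      have hd2 : ∀ i ∈ S, ∀ j ∈ T, 2 ≤ Nat.gcd (m i) (m j) := by
        intro i hiS j hjT
        have hij : i ≠ j := by
          intro h
          rw [h] at hiS
          exact ((hmemT j).mp hjT) ((hmemS j).mp hiS)
        have hpos := hgcdpos i j
        by_contra hlt
        push_neg at hlt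
        have h1 : Nat.gcd (m i) (m j) = 1 := by omega
        exact hnd i j hij (by rw [h1]; exact one_dvd _)
      set PP : Finset ℕ := ((Finset.range k).filter Nat.Prime).erase p with hPP
      set Q : Fin k → Finset ℕ :=
        fun i => (Finset.range k).filter (fun q => q.Prime ∧ q ∣ m i ∧ q ≠ p) with hQ
      have hmemQ : ∀ i q, q ∈ Q i ↔ (q < k ∧ q.Prime ∧ q ∣ m i ∧ q ≠ p) := by
        intro i q
        simp only [hQ, Finset.mem_filter, Finset.mem_range]
      set qf : Fin k → Fin k → ℕ := fun i j => (Nat.gcd (m i) (m j)).minFac with hqf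
      have hqfdvdj : ∀ i j : Fin k, qf i j ∣ m j :=
        fun i j => (Nat.minFac_dvd _).trans (Nat.gcd_dvd_right _ _)
      have hqfQ : ∀ i ∈ S, ∀ j ∈ T, qf i j ∈ Q i := by
        intro i hiS j hjT
        have h2 := hd2 i hiS j hjT
        have hij : i ≠ j := by
          intro h
          rw [h] at hiS
          exact ((hmemT j).mp hjT) ((hmemS j).mp hiS)
        have hprime : (qf i j).Prime := Nat.minFac_prime (by omega)
        have hdvd : qf i j ∣ m i := (Nat.minFac_dvd _).trans (Nat.gcd_dvd_left _ _)
        have hlt : qf i j < k := by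
          have h1 : qf i j ≤ Nat.gcd (m i) (m j) := Nat.minFac_le (hgcdpos i j)
          have := hgcd i j hij
          omega
        have hnep : qf i j ≠ p := by
          intro h
          exact ((hmemT j).mp hjT) (h ▸ hqfdvdj i j)
        exact (hmemQ i (qf i j)).mpr ⟨hlt, hprime, hdvd, hnep⟩
      have hdisjQ : ∀ i ∈ S, ∀ i' ∈ S, i ≠ i' → Disjoint (Q i) (Q i') := by
        intro i hiS i' hi'S hii'
        rw [Finset.disjoint_left]
        intro q hq hq'
        obtain ⟨_, hqp, hqd, hqnep⟩ := (hmemQ i q).mp hq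
        obtain ⟨_, _, hqd', _⟩ := (hmemQ i' q).mp hq'
        have : q ∣ p := by
          have hg : Nat.gcd (m i) (m i') = p :=
            gcdSS i i' hii' ((hmemS i).mp hiS) ((hmemS i').mp hi'S)
          exact hg ▸ Nat.dvd_gcd hqd hqd'
        exact hqnep ((Nat.prime_dvd_prime_iff_eq hqp hp).mp this)
      have hQsub : ∀ i ∈ S, Q i ⊆ PP := by
        intro i hiS q hq
        obtain ⟨hlt, hqp, _, hqnep⟩ := (hmemQ i q).mp hq
        rw [hPP]
        exact Finset.mem_erase.mpr
          ⟨hqnep, Finset.mem_filter.mpr ⟨Finset.mem_range.mpr hlt, hqp⟩⟩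
      have hQpos : ∀ i ∈ S, 1 ≤ (Q i).card := by
        intro i hiS
        exact Finset.card_pos.mpr ⟨qf i j0, hqfQ i hiS j0 hj0⟩
      -- sum of card Q over S bounded by card PP
      have hsumPP : ∑ i ∈ S, (Q i).card ≤ PP.card := by
        rw [← Finset.card_biUnion hdisjQ]
        exact Finset.card_le_card (Finset.biUnion_subset.mpr hQsub)
      -- split the sum
      have e3 : (Q i3).card + ∑ i ∈ ((S.erase i1).erase i2).erase i3, (Q i).card
          = ∑ i ∈ (S.erase i1).erase i2, (Q i).card :=
        Finset.add_sum_erase _ (fun i => (Q i).card) hi3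
      have e2 : (Q i2).card + ∑ i ∈ (S.erase i1).erase i2, (Q i).card
          = ∑ i ∈ S.erase i1, (Q i).card :=
        Finset.add_sum_erase _ (fun i => (Q i).card) hi2
      have e1 : (Q i1).card + ∑ i ∈ S.erase i1, (Q i).card
          = ∑ i ∈ S, (Q i).card :=
        Finset.add_sum_erase _ (fun i => (Q i).card) hi1
      have hrest : (((S.erase i1).erase i2).erase i3).card
          ≤ ∑ i ∈ ((S.erase i1).erase i2).erase i3, (Q i).card := by
        rw [Finset.card_eq_sum_ones]
        apply Finset.sum_le_sum
        intro i hi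
        exact hQpos i
          (Finset.mem_of_mem_erase (Finset.mem_of_mem_erase (Finset.mem_of_mem_erase hi)))
      have hcard3 : (((S.erase i1).erase i2).erase i3).card = S.card - 3 := by
        rw [Finset.card_erase_of_mem hi3, Finset.card_erase_of_mem hi2,
          Finset.card_erase_of_mem hi1]
        omega
      have hPPcard : PP.card + 1 = ((Finset.range k).filter Nat.Prime).card := by
        rw [hPP, Finset.card_erase_of_mem]
        · have : 0 < ((Finset.range k).filter Nat.Prime).card :=
            Finset.card_pos.mpr ⟨p, Finset.mem_filter.mpr ⟨Finset.mem_range.mpr hpk, hp⟩⟩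
          omega
        · exact Finset.mem_filter.mpr ⟨Finset.mem_range.mpr hpk, hp⟩
      -- injectivity of the prime tuple map on T
      set τ : Fin k → ℕ × ℕ × ℕ := fun j => (qf i1 j, qf i2 j, qf i3 j) with hτ
      have hinjT : Set.InjOn τ ↑T := by
        intro j hj j' hj' heq
        by_contra hne
        have hjT : j ∈ T := Finset.mem_coe.mp hj
        have hj'T : j' ∈ T := Finset.mem_coe.mp hj'
        simp only [hτ, Prod.mk.injEq] at heq
        obtain ⟨hq1, hq2, hq3⟩ := heq
        obtain ⟨_, hp1, _, _⟩ := (hmemQ i1 (qf i1 j)).mp (hqfQ i1 hi1 j hjT)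
        obtain ⟨_, hp2, _, _⟩ := (hmemQ i2 (qf i2 j)).mp (hqfQ i2 hi2S j hjT)
        obtain ⟨_, hp3, _, _⟩ := (hmemQ i3 (qf i3 j)).mp (hqfQ i3 hi3S j hjT)
        have hne12 : qf i1 j ≠ qf i2 j := by
          intro h
          exact (Finset.disjoint_left.mp (hdisjQ i1 hi1 i2 hi2S h12)
            (hqfQ i1 hi1 j hjT)) (h ▸ hqfQ i2 hi2S j hjT)
        have hne13 : qf i1 j ≠ qf i3 j := by
          intro h
          exact (Finset.disjoint_left.mp (hdisjQ i1 hi1 i3 hi3S (Ne.symm h31))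
            (hqfQ i1 hi1 j hjT)) (h ▸ hqfQ i3 hi3S j hjT)
        have hne23 : qf i2 j ≠ qf i3 j := by
          intro h
          exact (Finset.disjoint_left.mp (hdisjQ i2 hi2S i3 hi3S (Ne.symm h32))
            (hqfQ i2 hi2S j hjT)) (h ▸ hqfQ i3 hi3S j hjT)
        have hdv1 : qf i1 j ∣ Nat.gcd (m j) (m j') :=
          Nat.dvd_gcd (hqfdvdj i1 j) (hq1 ▸ hqfdvdj i1 j')
        have hdv2 : qf i2 j ∣ Nat.gcd (m j) (m j') :=
          Nat.dvd_gcd (hqfdvdj i2 j) (hq2 ▸ hqfdvdj i2 j')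
        have hdv3 : qf i3 j ∣ Nat.gcd (m j) (m j') :=
          Nat.dvd_gcd (hqfdvdj i3 j) (hq3 ▸ hqfdvdj i3 j')
        have hcop12 : Nat.Coprime (qf i1 j) (qf i2 j) :=
          (Nat.coprime_primes hp1 hp2).mpr hne12
        have hcop13 : Nat.Coprime (qf i1 j) (qf i3 j) :=
          (Nat.coprime_primes hp1 hp3).mpr hne13
        have hcop23 : Nat.Coprime (qf i2 j) (qf i3 j) :=
          (Nat.coprime_primes hp2 hp3).mpr hne23
        have hdv12 : qf i1 j * qf i2 j ∣ Nat.gcd (m j) (m j') :=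
          Nat.Coprime.mul_dvd_of_dvd_of_dvd hcop12 hdv1 hdv2
        have hcop123 : Nat.Coprime (qf i1 j * qf i2 j) (qf i3 j) :=
          Nat.Coprime.mul hcop13 hcop23
        have hdv123 : qf i1 j * qf i2 j * qf i3 j ∣ Nat.gcd (m j) (m j') :=
          Nat.Coprime.mul_dvd_of_dvd_of_dvd hcop123 hdv12 hdv3
        have hle : qf i1 j * qf i2 j * qf i3 j ≤ Nat.gcd (m j) (m j') :=
          Nat.le_of_dvd (hgcdpos j j') hdv123
        have h30 : 30 ≤ qf i1 j * qf i2 j * qf i3 j :=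
          thirty_le_three_primes hp1 hp2 hp3 hne12 hne13 hne23
        have := hgcd j j' hne
        omega
      have hmaps : ∀ j ∈ T, τ j ∈ (Q i1) ×ˢ ((Q i2) ×ˢ (Q i3)) := by
        intro j hjT
        exact Finset.mem_product.mpr ⟨hqfQ i1 hi1 j hjT,
          Finset.mem_product.mpr ⟨hqfQ i2 hi2S j hjT, hqfQ i3 hi3S j hjT⟩⟩
      have hTle : T.card ≤ (Q i1).card * ((Q i2).card * (Q i3).card) := by
        have := Finset.card_le_card_of_injOn τ hmaps hinjT
        rwa [Finset.card_product, Finset.card_product] at this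
      -- numeric conclusion
      have hnum := NUMMAIN k S.card (Q i1).card (Q i2).card (Q i3).card PP.card
        hk7 hk30 hPPcard hgt3 (by omega)
        (hQpos i1 hi1) (hQpos i2 hi2S) (hQpos i3 hi3S)
        (by omega)
        (by rw [mul_assoc]; omega)
      obtain ⟨hk30', hs3, hw1, hw2, hw3, hC9⟩ := hnum
      -- ========== k = 30 endgame ==========
      have hTcard : T.card = 27 := by omega
      have hUsub : Q i1 ∪ Q i2 ∪ Q i3 ⊆ PP :=
        Finset.union_subset (Finset.union_subset (hQsub i1 hi1) (hQsub i2 hi2S))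
          (hQsub i3 hi3S)
      have hd12' := hdisjQ i1 hi1 i2 hi2S h12
      have hd13' := hdisjQ i1 hi1 i3 hi3S (Ne.symm h31)
      have hd23' := hdisjQ i2 hi2S i3 hi3S (Ne.symm h32)
      have hcardU : (Q i1 ∪ Q i2 ∪ Q i3).card = 9 := by
        rw [Finset.card_union_of_disjoint
            (Finset.disjoint_union_left.mpr ⟨hd13', hd23'⟩),
          Finset.card_union_of_disjoint hd12']
        omega
      have hUPP : Q i1 ∪ Q i2 ∪ Q i3 = PP :=
        Finset.eq_of_subset_of_card_le hUsub (by omega)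
      set qs : ℕ := if p = 17 then 19 else 17 with hqs
      have hqsprime : qs.Prime := by
        rw [hqs]; split_ifs <;> norm_num
      have hqsnep : qs ≠ p := by
        rw [hqs]; split_ifs with h
        · omega
        · exact fun hh => h hh.symm
      have hqs17 : 17 ≤ qs := by rw [hqs]; split_ifs <;> omega
      have hqslt : qs < k := by rw [hqs]; split_ifs <;> omega
      have hqsPP : qs ∈ PP := by
        rw [hPP]
        exact Finset.mem_erase.mpr ⟨hqsnep,
          Finset.mem_filter.mpr ⟨Finset.mem_range.mpr hqslt, hqsprime⟩⟩
      have hqsU : qs ∈ Q i1 ∨ qs ∈ Q i2 ∨ qs ∈ Q i3 := by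
        have : qs ∈ Q i1 ∪ Q i2 ∪ Q i3 := hUPP ▸ hqsPP
        simpa [Finset.mem_union, or_assoc] using this
      have himgeq : T.image τ = (Q i1) ×ˢ ((Q i2) ×ˢ (Q i3)) := by
        apply Finset.eq_of_subset_of_card_le
        · intro x hx
          obtain ⟨j, hjT, rfl⟩ := Finset.mem_image.mp hx
          exact hmaps j hjT
        · rw [Finset.card_product, Finset.card_product,
            Finset.card_image_of_injOn hinjT, hTcard, hw1, hw2, hw3]
      have hsurj : ∀ x y z : ℕ, x ∈ Q i1 → y ∈ Q i2 → z ∈ Q i3 →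
          ∃ j, j ∈ T ∧ τ j = (x, y, z) := by
        intro x y z hx hy hz
        have hmem : (x, y, z) ∈ T.image τ := by
          rw [himgeq]
          exact Finset.mem_product.mpr ⟨hx, Finset.mem_product.mpr ⟨hy, hz⟩⟩
        obtain ⟨j, hjT, hje⟩ := Finset.mem_image.mp hmem
        exact ⟨j, hjT, hje⟩
      have pair_contra : ∀ (j1 j2 : Fin k), j1 ≠ j2 → ∀ (x y : ℕ),
          x.Prime → y.Prime → x ≠ y → 17 ≤ x →
          x ∣ m j1 → x ∣ m j2 → y ∣ m j1 → y ∣ m j2 → False := by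
        intro j1 j2 hne x y hxp hyp hxy h17 hxd1 hxd2 hyd1 hyd2
        have hdg : x * y ∣ Nat.gcd (m j1) (m j2) :=
          Nat.Coprime.mul_dvd_of_dvd_of_dvd ((Nat.coprime_primes hxp hyp).mpr hxy)
            (Nat.dvd_gcd hxd1 hxd2) (Nat.dvd_gcd hyd1 hyd2)
        have hle : x * y ≤ Nat.gcd (m j1) (m j2) := Nat.le_of_dvd (hgcdpos j1 j2) hdg
        have h34 : 34 ≤ x * y :=
          calc (34:ℕ) = 17 * 2 := by norm_num
            _ ≤ x * y := Nat.mul_le_mul h17 hyp.two_le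
        have := hgcd j1 j2 hne
        omega
      have hQprime : ∀ i : Fin k, ∀ q ∈ Q i, q.Prime := by
        intro i q hq
        exact ((hmemQ i q).mp hq).2.1
      have htwo : ∀ i : Fin k, (Q i).card = 3 → ∃ z1 ∈ Q i, ∃ z2 ∈ Q i, z1 ≠ z2 := by
        intro i hc
        exact Finset.one_lt_card.mp (by omega)
      rcases hqsU with hqsQ | hqsQ | hqsQ
      · obtain ⟨z1, hz1, z2, hz2, hz12⟩ := htwo i3 hw3
        have hy0 : qf i2 j0 ∈ Q i2 := hqfQ i2 hi2S j0 hj0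
        obtain ⟨j1, hj1T, hτ1⟩ := hsurj qs (qf i2 j0) z1 hqsQ hy0 hz1
        obtain ⟨j2, hj2T, hτ2⟩ := hsurj qs (qf i2 j0) z2 hqsQ hy0 hz2
        simp only [hτ, Prod.mk.injEq] at hτ1 hτ2
        obtain ⟨ha1, hb1, hc1⟩ := hτ1
        obtain ⟨ha2, hb2, hc2⟩ := hτ2
        have hne12 : j1 ≠ j2 := by
          intro h
          exact hz12 (by rw [← hc1, h, hc2])
        exact pair_contra j1 j2 hne12 qs (qf i2 j0) hqsprime (hQprime i2 _ hy0)
          (fun h => Finset.disjoint_left.mp hd12' hqsQ (by rw [h]; exact hy0)) hqs17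
          (ha1 ▸ hqfdvdj i1 j1) (ha2 ▸ hqfdvdj i1 j2)
          (hb1 ▸ hqfdvdj i2 j1) (hb2 ▸ hqfdvdj i2 j2)
      · obtain ⟨z1, hz1, z2, hz2, hz12⟩ := htwo i3 hw3
        have hx0 : qf i1 j0 ∈ Q i1 := hqfQ i1 hi1 j0 hj0
        obtain ⟨j1, hj1T, hτ1⟩ := hsurj (qf i1 j0) qs z1 hx0 hqsQ hz1
        obtain ⟨j2, hj2T, hτ2⟩ := hsurj (qf i1 j0) qs z2 hx0 hqsQ hz2
        simp only [hτ, Prod.mk.injEq] at hτ1 hτ2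
        obtain ⟨ha1, hb1, hc1⟩ := hτ1
        obtain ⟨ha2, hb2, hc2⟩ := hτ2
        have hne12 : j1 ≠ j2 := by
          intro h
          exact hz12 (by rw [← hc1, h, hc2])
        exact pair_contra j1 j2 hne12 qs (qf i1 j0) hqsprime (hQprime i1 _ hx0)
          (fun h => Finset.disjoint_left.mp hd12'
            (show qs ∈ Q i1 by rw [h]; exact hx0) hqsQ) hqs17
          (hb1 ▸ hqfdvdj i2 j1) (hb2 ▸ hqfdvdj i2 j2)
          (ha1 ▸ hqfdvdj i1 j1) (ha2 ▸ hqfdvdj i1 j2)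
      · obtain ⟨x1, hx1, x2, hx2, hx12⟩ := htwo i1 hw1
        have hy0 : qf i2 j0 ∈ Q i2 := hqfQ i2 hi2S j0 hj0
        obtain ⟨j1, hj1T, hτ1⟩ := hsurj x1 (qf i2 j0) qs hx1 hy0 hqsQ
        obtain ⟨j2, hj2T, hτ2⟩ := hsurj x2 (qf i2 j0) qs hx2 hy0 hqsQ
        simp only [hτ, Prod.mk.injEq] at hτ1 hτ2
        obtain ⟨ha1, hb1, hc1⟩ := hτ1
        obtain ⟨ha2, hb2, hc2⟩ := hτ2
        have hne12 : j1 ≠ j2 := by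
          intro h
          exact hx12 (by rw [← ha1, h, ha2])
        exact pair_contra j1 j2 hne12 qs (qf i2 j0) hqsprime (hQprime i2 _ hy0)
          (fun h => Finset.disjoint_left.mp hd23'
            (show qs ∈ Q i2 by rw [h]; exact hy0) hqsQ) hqs17
          (hc1 ▸ hqfdvdj i3 j1) (hc2 ▸ hqfdvdj i3 j2)
          (hb1 ▸ hqfdvdj i2 j1) (hb2 ▸ hqfdvdj i2 j2)
  omega
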